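/- (Lemma 2 of the paper.) Let γₙ denote the standard Gaussian measure on ℝⁿ, let f : ℝⁿ → ℝ be Lipschitz with constant L₀ ≥ 0 and ρ-weakly convex in the sense that x ↦ f(x) + (ρ/2)‖x‖² is convex, with ρ ≥ 0. Let u > 0 and let f_u(x) = ∫ f(x + u·z) dγₙ(z) be the Gaussian smoothing, assumed differentiable at the points x and y. Then ⟨∇f_u(x) − ∇f_u(y), x − y⟩ ≥ −ρ‖x − y‖² − 4·L₀·u·‖x − y‖. -/

import Mathlib

open MeasureTheory ProbabilityTheory Real
open scoped RealInnerProductSpace NNReal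

/-- The standard Gaussian measure on `ℝⁿ`. -/
noncomputable def stdGaussian (n : ℕ) : Measure (EuclideanSpace ℝ (Fin n)) :=
  (Measure.pi fun _ : Fin n => gaussianReal 0 1).map (MeasurableEquiv.toLp 2 (Fin n → ℝ))

lemma gauss_int_abs : Integrable (fun x : ℝ => |x|) (gaussianReal 0 1) := by
  have h0 : Integrable (fun x : ℝ => x * rexp (-(2⁻¹) * x ^ 2)) volume :=
    integrable_mul_exp_neg_mul_sq (by norm_num)
  have h1 := h0.abs
  rw [gaussianReal_of_var_ne_zero 0 one_ne_zero,
    integrable_withDensity_iff_integrable_smul' (measurable_gaussianPDF 0 1)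
      (ae_of_all _ fun x => ENNReal.ofReal_lt_top)]
  have h2 : (fun x : ℝ => (gaussianPDF 0 1 x).toReal • |x|)
      = fun x : ℝ => (√(2 * π))⁻¹ * |x * rexp (-(2⁻¹) * x ^ 2)| := by
    funext x
    rw [gaussianPDF, ENNReal.toReal_ofReal (gaussianPDFReal_nonneg _ _ _), gaussianPDFReal,
      abs_mul, abs_of_nonneg (Real.exp_pos _).le]
    have : -(x - 0) ^ 2 / (2 * ((1:ℝ≥0):ℝ)) = -(2⁻¹) * x ^ 2 := by push_cast; ring
    rw [this]
    push_cast
    rw [smul_eq_mul]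
    ring
  rw [h2]
  exact h1.const_mul _

lemma sum_le_prod_one_add {ι : Type*} (s : Finset ι) (a : ι → ℝ) (ha : ∀ i, 0 ≤ a i) :
    ∑ i ∈ s, a i ≤ ∏ i ∈ s, (1 + a i) := by
  classical
  induction s using Finset.induction_on with
  | empty => simp
  | @insert i s hi ih =>
    rw [Finset.sum_insert hi, Finset.prod_insert hi]
    have hp1 : (1:ℝ) ≤ ∏ j ∈ s, (1 + a j) := by
      have h := Finset.prod_le_prod (s := s) (f := fun _ => (1:ℝ)) (g := fun j => 1 + a j)
        (fun j _ => zero_le_one) (fun j _ => by simpa using ha j)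
      simpa using h
    nlinarith [ha i]

lemma integrable_norm_stdGaussian (n : ℕ) :
    Integrable (fun z : EuclideanSpace ℝ (Fin n) => ‖z‖) (stdGaussian n) := by
  letI : MeasureSpace ℝ := ⟨gaussianReal 0 1⟩
  haveI : IsProbabilityMeasure (volume : Measure ℝ) :=
    inferInstanceAs (IsProbabilityMeasure (gaussianReal 0 1))
  have h1 : Integrable (fun x : ℝ => 1 + |x|) volume := (integrable_const 1).add gauss_int_abs
  have hprod : Integrable (fun z : Fin n → ℝ => ∏ i, (1 + |z i|)) volume :=
    Integrable.fintype_prod (f := fun _ x => 1 + |x|) (fun _ => h1)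
  have key : Integrable (fun z : EuclideanSpace ℝ (Fin n) => ∏ i, (1 + |z i|)) (stdGaussian n) :=
    (integrable_map_equiv _ _).mpr hprod
  refine key.mono' continuous_norm.aestronglyMeasurable (ae_of_all _ fun z => ?_)
  rw [norm_norm]
  calc ‖z‖ ≤ ∑ i, |z i| := by
        rw [EuclideanSpace.norm_eq]
        refine (Real.sqrt_le_sqrt ?_).trans_eq (Real.sqrt_sq (by positivity))
        simp only [Real.norm_eq_abs]
        exact Finset.sum_sq_le_sq_sum_of_nonneg fun i _ => abs_nonneg _
    _ ≤ ∏ i, (1 + |z i|) := sum_le_prod_one_add _ _ fun i => abs_nonneg _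

/-- Lemma 2 of the paper: if `f` is `L₀`-Lipschitz and `ρ`-weakly convex and the Gaussian
smoothing `f_u` has gradients `gx` at `x` and `gy` at `y`, then
`⟪gx - gy, x - y⟫ ≥ -ρ‖x - y‖² - 4 L₀ u ‖x - y‖`. -/
theorem stmt7 (n : ℕ) (f : EuclideanSpace ℝ (Fin n) → ℝ) (L₀ : ℝ) (hL₀ : 0 ≤ L₀)
    (hf : ∀ x y, |f x - f y| ≤ L₀ * ‖x - y‖) (ρ : ℝ) (hρ : 0 ≤ ρ)
    (hconv : ConvexOn ℝ Set.univ (fun x => f x + ρ / 2 * ‖x‖ ^ 2)) (u : ℝ) (hu : 0 < u)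
    (x y gx gy : EuclideanSpace ℝ (Fin n))
    (hgx : HasGradientAt (fun w => ∫ z, f (w + u • z) ∂(stdGaussian n)) gx x)
    (hgy : HasGradientAt (fun w => ∫ z, f (w + u • z) ∂(stdGaussian n)) gy y) :
    ⟪gx - gy, x - y⟫ ≥ -ρ * ‖x - y‖ ^ 2 - 4 * L₀ * u * ‖x - y‖ := by
  haveI : IsProbabilityMeasure (stdGaussian n) :=
    Measure.isProbabilityMeasure_map (MeasurableEquiv.toLp 2 (Fin n → ℝ)).measurable.aemeasurable
  set F : EuclideanSpace ℝ (Fin n) → ℝ := fun w => ∫ z, f (w + u • z) ∂(stdGaussian n) with hFdef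
  -- continuity of f
  have hcont : Continuous f := by
    have : LipschitzWith (Real.toNNReal L₀) f :=
      LipschitzWith.of_dist_le_mul fun a b => by
        rw [Real.dist_eq, dist_eq_norm, Real.coe_toNNReal L₀ hL₀]; exact hf a b
    exact this.continuous
  -- integrability of the shifted function
  have hint : ∀ a : EuclideanSpace ℝ (Fin n), Integrable (fun z => f (a + u • z)) (stdGaussian n) := by
    intro a
    have hmeas : AEStronglyMeasurable (fun z : EuclideanSpace ℝ (Fin n) => f (a + u • z)) (stdGaussian n) :=
      (hcont.comp (continuous_const.add (continuous_id.const_smul u))).aestronglyMeasurable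
    refine ((integrable_const (|f 0| + L₀ * ‖a‖)).add
      ((integrable_norm_stdGaussian n).const_mul (L₀ * u))).mono' hmeas
      (ae_of_all _ fun z => ?_)
    have h1 : |f (a + u • z) - f 0| ≤ L₀ * ‖a + u • z‖ := by simpa using hf (a + u • z) 0
    have h2 : ‖a + u • z‖ ≤ ‖a‖ + u * ‖z‖ := by
      calc ‖a + u • z‖ ≤ ‖a‖ + ‖u • z‖ := norm_add_le _ _
        _ = ‖a‖ + u * ‖z‖ := by rw [norm_smul, Real.norm_eq_abs, abs_of_pos hu]
    have h3 : L₀ * ‖a + u • z‖ ≤ L₀ * (‖a‖ + u * ‖z‖) := by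
      exact mul_le_mul_of_nonneg_left h2 hL₀
    rw [Real.norm_eq_abs]
    show |f (a + u • z)| ≤ (|f 0| + L₀ * ‖a‖) + L₀ * u * ‖z‖
    have h4 := abs_sub_abs_le_abs_sub (f (a + u • z)) (f 0)
    nlinarith
  -- convexity of the smoothed Moreau-type function
  have hGconv : ConvexOn ℝ Set.univ (fun w : EuclideanSpace ℝ (Fin n) => F w + ρ / 2 * ‖w‖ ^ 2) := by
    refine ⟨convex_univ, fun a _ b _ t s ht hs hts => ?_⟩
    have hq : ∀ p q : EuclideanSpace ℝ (Fin n), ρ / 2 * ‖t • p + s • q‖ ^ 2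
        = t * (ρ / 2 * ‖p‖ ^ 2) + s * (ρ / 2 * ‖q‖ ^ 2) - ρ / 2 * t * s * ‖p - q‖ ^ 2 := by
      intro p q
      have h1 : ‖t • p + s • q‖ ^ 2
          = t ^ 2 * ‖p‖ ^ 2 + 2 * (t * s) * ⟪p, q⟫ + s ^ 2 * ‖q‖ ^ 2 := by
        rw [norm_add_sq_real, norm_smul, norm_smul, real_inner_smul_left, real_inner_smul_right,
          Real.norm_eq_abs, abs_of_nonneg ht, Real.norm_eq_abs, abs_of_nonneg hs]
        ring
      have h2 : ‖p - q‖ ^ 2 = ‖p‖ ^ 2 - 2 * ⟪p, q⟫ + ‖q‖ ^ 2 := by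
        rw [norm_sub_sq_real]
      have hs' : s = 1 - t := by linarith
      subst hs'
      rw [h1, h2]; ring
    have hptwise : ∀ z : EuclideanSpace ℝ (Fin n), f ((t • a + s • b) + u • z)
        ≤ t * f (a + u • z) + s * f (b + u • z) + ρ / 2 * t * s * ‖a - b‖ ^ 2 := by
      intro z
      have hcv := hconv.2 (Set.mem_univ (a + u • z)) (Set.mem_univ (b + u • z)) ht hs hts
      have hxy : t • (a + u • z) + s • (b + u • z) = (t • a + s • b) + u • z := by
        have h5 : t • (u • z) + s • (u • z) = u • z := by
          rw [← add_smul, hts, one_smul]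
        calc t • (a + u • z) + s • (b + u • z)
            = (t • a + s • b) + (t • (u • z) + s • (u • z)) := by
              rw [smul_add, smul_add]; abel
          _ = (t • a + s • b) + u • z := by rw [h5]
      rw [hxy] at hcv
      have hqq := hq (a + u • z) (b + u • z)
      have hd : (a + u • z) - (b + u • z) = a - b := by abel
      rw [hxy, hd] at hqq
      simp only [smul_eq_mul] at hcv
      linarith
    have hrhs : Integrable (fun z : EuclideanSpace ℝ (Fin n) => t * f (a + u • z) + s * f (b + u • z)
        + ρ / 2 * t * s * ‖a - b‖ ^ 2) (stdGaussian n) :=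
      (((hint a).const_mul t).add ((hint b).const_mul s)).add (integrable_const _)
    have hmono := integral_mono (hint (t • a + s • b)) hrhs hptwise
    have hI1 : Integrable (fun z : EuclideanSpace ℝ (Fin n) =>
        t * f (a + u • z) + s * f (b + u • z)) (stdGaussian n) :=
      ((hint a).const_mul t).add ((hint b).const_mul s)
    have hcomp : ∫ z, (t * f (a + u • z) + s * f (b + u • z)
        + ρ / 2 * t * s * ‖a - b‖ ^ 2) ∂(stdGaussian n)
        = t * F a + s * F b + ρ / 2 * t * s * ‖a - b‖ ^ 2 := by
      rw [integral_add hI1 (integrable_const _),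
        integral_add ((hint a).const_mul t) ((hint b).const_mul s),
        integral_const_mul, integral_const_mul, integral_const]
      simp
      rfl
    rw [hcomp] at hmono
    have hqab := hq a b
    simp only [smul_eq_mul]
    linarith
  -- one-dimensional restriction
  set v : EuclideanSpace ℝ (Fin n) := y - x with hvdef
  set φ : ℝ → ℝ := fun t => F (x + t • v) + ρ / 2 * ‖x + t • v‖ ^ 2 with hφdef
  have hφconv : ConvexOn ℝ Set.univ φ := by
    have hcomp := hGconv.comp_affineMap (AffineMap.lineMap x y : ℝ →ᵃ[ℝ] EuclideanSpace ℝ (Fin n))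
    have heq : ((fun w : EuclideanSpace ℝ (Fin n) => F w + ρ / 2 * ‖w‖ ^ 2) ∘ (AffineMap.lineMap x y : ℝ →ᵃ[ℝ] EuclideanSpace ℝ (Fin n))) = φ := by
      funext t
      simp only [Function.comp_apply, AffineMap.lineMap_apply_module, φ, v]
      have harg : (1 - t) • x + t • y = x + t • (y - x) := by
        rw [sub_smul, one_smul, smul_sub]; abel
      rw [harg]
    rw [heq, Set.preimage_univ] at hcomp
    exact hcomp
  -- derivative of the line map
  have hc : ∀ t : ℝ, HasDerivAt (fun τ : ℝ => x + τ • v) v t := by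
    intro t
    simpa using ((hasDerivAt_id t).smul_const v).const_add x
  -- derivative of the quadratic part
  have hquad : ∀ t : ℝ, HasDerivAt (fun τ : ℝ => ρ / 2 * ‖x + τ • v‖ ^ 2)
      (ρ * ⟪x + t • v, v⟫) t := by
    intro t
    have hrw : (fun τ : ℝ => ρ / 2 * ‖x + τ • v‖ ^ 2)
        = fun τ => ρ / 2 * ‖x‖ ^ 2 + (ρ * ⟪x, v⟫) * τ + (ρ / 2 * ‖v‖ ^ 2) * τ ^ 2 := by
      funext τ
      rw [norm_add_sq_real, norm_smul, real_inner_smul_right, Real.norm_eq_abs, mul_pow, sq_abs]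
      ring
    rw [hrw]
    have hpoly : HasDerivAt (fun τ : ℝ => ρ / 2 * ‖x‖ ^ 2 + (ρ * ⟪x, v⟫) * τ
        + (ρ / 2 * ‖v‖ ^ 2) * τ ^ 2) ((ρ * ⟪x, v⟫) * 1 + (ρ / 2 * ‖v‖ ^ 2) * (2 * t ^ 1)) t := by
      exact (((hasDerivAt_id t).const_mul (ρ * ⟪x, v⟫)).const_add
        (ρ / 2 * ‖x‖ ^ 2)).add ((hasDerivAt_pow 2 t).const_mul (ρ / 2 * ‖v‖ ^ 2))
    convert hpoly using 1
    rw [inner_add_left, real_inner_smul_left, real_inner_self_eq_norm_sq]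
    ring
  -- derivative of the F part along the line
  have hFd : ∀ (t : ℝ) (g : EuclideanSpace ℝ (Fin n)), HasGradientAt F g (x + t • v)
      → HasDerivAt (fun τ : ℝ => F (x + τ • v)) ⟪g, v⟫ t := by
    intro t g hg
    have h1 : HasFDerivAt F (InnerProductSpace.toDual ℝ (EuclideanSpace ℝ (Fin n)) g : EuclideanSpace ℝ (Fin n) →L[ℝ] ℝ) (x + t • v) :=
      hasGradientAt_iff_hasFDerivAt.mp hg
    have h2 := h1.comp_hasDerivAt t (hc t)
    convert h2 using 1
    · rfl
    · rfl
    · rfl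
    · simp
  have hx0 : x + (0:ℝ) • v = x := by simp
  have hy1 : x + (1:ℝ) • v = y := by simp [v]
  have hφ0 : HasDerivAt φ (⟪gx, v⟫ + ρ * ⟪x, v⟫) 0 := by
    have hfd := hFd 0 gx (by rw [hx0]; exact hgx)
    have hqd := hquad 0
    rw [hx0] at hqd
    exact hfd.add hqd
  have hφ1 : HasDerivAt φ (⟪gy, v⟫ + ρ * ⟪y, v⟫) 1 := by
    have hfd := hFd 1 gy (by rw [hy1]; exact hgy)
    have hqd := hquad 1
    rw [hy1] at hqd
    exact hfd.add hqd
  have hA := hφconv.le_slope_of_hasDerivAt (Set.mem_univ (0:ℝ)) (Set.mem_univ (1:ℝ)) one_pos hφ0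
  have hB := hφconv.slope_le_of_hasDerivAt (Set.mem_univ (0:ℝ)) (Set.mem_univ (1:ℝ)) one_pos hφ1
  have hmono : ⟪gx, v⟫ + ρ * ⟪x, v⟫ ≤ ⟪gy, v⟫ + ρ * ⟪y, v⟫ := hA.trans hB
  have h1 : ⟪gx - gy, x - y⟫ = ⟪gy, v⟫ - ⟪gx, v⟫ := by
    have : x - y = -v := by simp [v]
    rw [this, inner_neg_right, inner_sub_left]
    ring
  have h2 : ρ * ⟪x, v⟫ - ρ * ⟪y, v⟫ = -ρ * ‖v‖ ^ 2 := by
    have : ⟪x, v⟫ - ⟪y, v⟫ = -‖v‖ ^ 2 := by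
      rw [← inner_sub_left]
      have : x - y = -v := by simp [v]
      rw [this, inner_neg_left, real_inner_self_eq_norm_sq]
    nlinarith [this]
  have h3 : ‖x - y‖ = ‖v‖ := by rw [show x - y = -v by simp [v], norm_neg]
  have h4 : 0 ≤ 4 * L₀ * u * ‖v‖ := by positivity
  rw [ge_iff_le, h3, h1]
  linarith
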